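/- Let u_R : ℝ → ℝ^m and u_L : ℝ → ℝ^n be differentiable curves with ‖u_R(t)‖ = ‖u_L(t)‖ = 1, and let γ : ℝ → ℝ be differentiable. Define w : ℝ → ℝ^{m+n} by w = (u_R·sin γ, u_L·cos γ). Then ‖w(t)‖ = 1 and ‖ẇ‖² = γ̇² + ‖u̇_R‖² sin²γ + ‖u̇_L‖² cos²γ. -/

import Mathlib

open scoped RealInnerProductSpace

lemma euc_norm_sq_eq {N : ℕ} (x : EuclideanSpace ℝ (Fin N)) :
    ‖x‖^2 = ∑ i, x i ^ 2 := by
  rw [← real_inner_self_eq_norm_sq]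
  rw [real_inner_self_eq_norm_sq, EuclideanSpace.real_norm_sq_eq]

lemma euc_orth {N : ℕ} (u : ℝ → EuclideanSpace ℝ (Fin N))
    (hu : Differentiable ℝ u) (hn : ∀ t, ‖u t‖ = 1) (t : ℝ) :
    ∑ i, u t i * deriv u t i = 0 := by
  have h1 : HasDerivAt (fun s => (⟪u s, u s⟫ : ℝ))
      (⟪u t, deriv u t⟫ + ⟪deriv u t, u t⟫) t :=
    (hu t).hasDerivAt.inner ℝ (hu t).hasDerivAt
  have h2 : (fun s => (⟪u s, u s⟫ : ℝ)) = fun _ => 1 := by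
    funext s
    rw [real_inner_self_eq_norm_sq, hn s, one_pow]
  rw [h2] at h1
  have h3 := h1.deriv
  rw [deriv_const] at h3
  have h4 : (⟪u t, deriv u t⟫ : ℝ) = 0 := by
    have hcomm := real_inner_comm (u t) (deriv u t)
    linarith
  rw [← h4]
  simp [PiLp.inner_apply, RCLike.inner_apply, mul_comm]

lemma sum_sq_expand {ι : Type*} (s : Finset ι) (a b : ℝ) (x y : ι → ℝ) :
    ∑ i ∈ s, (a * x i + b * y i)^2
      = a^2 * ∑ i ∈ s, x i ^ 2 + 2*a*b * ∑ i ∈ s, x i * y i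
        + b^2 * ∑ i ∈ s, y i ^ 2 := by
  have h : ∀ i, (a * x i + b * y i)^2
      = a^2 * x i ^ 2 + 2*a*b * (x i * y i) + b^2 * y i ^ 2 := fun i => by ring
  simp_rw [h, Finset.sum_add_distrib, ← Finset.mul_sum]

theorem tree_step_join_branches
    (m n : ℕ)
    (uR : ℝ → EuclideanSpace ℝ (Fin m)) (uL : ℝ → EuclideanSpace ℝ (Fin n))
    (huR : Differentiable ℝ uR) (huL : Differentiable ℝ uL)
    (huRnorm : ∀ t, ‖uR t‖ = 1) (huLnorm : ∀ t, ‖uL t‖ = 1)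
    (γ : ℝ → ℝ) (hγ : Differentiable ℝ γ)
    (w : ℝ → EuclideanSpace ℝ (Fin (m + n)))
    (hwR : ∀ t (i : Fin m), w t (Fin.castAdd n i) = Real.sin (γ t) * uR t i)
    (hwL : ∀ t (j : Fin n), w t (Fin.natAdd m j) = Real.cos (γ t) * uL t j) :
    ∀ t, ‖w t‖ = 1 ∧
      ‖deriv w t‖^2 = (deriv γ t)^2 + ‖deriv uR t‖^2 * Real.sin (γ t)^2
        + ‖deriv uL t‖^2 * Real.cos (γ t)^2 := by
  intro t
  set s := Real.sin (γ t) with hs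
  set c := Real.cos (γ t) with hc
  set g' := deriv γ t with hg'
  -- sums of squares of coordinates
  have hSR : ∑ i, uR t i ^ 2 = 1 := by
    rw [← euc_norm_sq_eq, huRnorm t, one_pow]
  have hSL : ∑ j, uL t j ^ 2 = 1 := by
    rw [← euc_norm_sq_eq, huLnorm t, one_pow]
  have hsc : s^2 + c^2 = 1 := Real.sin_sq_add_cos_sq (γ t)
  constructor
  · have h1 : ‖w t‖^2 = 1 := by
      rw [euc_norm_sq_eq, Fin.sum_univ_add]
      simp only [hwR, hwL, mul_pow]
      rw [← Finset.mul_sum, ← Finset.mul_sum, hSR, hSL]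
      simp only [mul_one]; exact hsc
    nlinarith [norm_nonneg (w t)]
  · -- derivative of w
    have hR' : ∀ i : Fin m, HasDerivAt (fun s => uR s i) (deriv uR t i) t := by
      intro i
      exact (EuclideanSpace.proj i).hasFDerivAt.comp_hasDerivAt t (huR t).hasDerivAt
    have hL' : ∀ j : Fin n, HasDerivAt (fun s => uL s j) (deriv uL t j) t := by
      intro j
      exact (EuclideanSpace.proj j).hasFDerivAt.comp_hasDerivAt t (huL t).hasDerivAt
    have hsin : HasDerivAt (fun s => Real.sin (γ s)) (c * g') t := (hγ t).hasDerivAt.sin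
    have hcos : HasDerivAt (fun s => Real.cos (γ s)) (-s * g') t := by
      simpa using (hγ t).hasDerivAt.cos
    set v : EuclideanSpace ℝ (Fin (m + n)) :=
      WithLp.toLp 2 fun k => Fin.addCases (fun i => c * g' * uR t i + s * deriv uR t i)
        (fun j => -s * g' * uL t j + c * deriv uL t j) k with hv
    have hcoord : ∀ k : Fin (m + n), HasDerivAt (fun τ => w τ k) (v k) t := by
      intro k
      refine Fin.addCases (fun i => ?_) (fun j => ?_) k
      · have : (fun τ => w τ (Fin.castAdd n i)) = fun τ => Real.sin (γ τ) * uR τ i := by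
          funext τ; exact hwR τ i
        rw [this, hv]
        simpa [Fin.addCases_left] using hsin.fun_mul (hR' i)
      · have : (fun τ => w τ (Fin.natAdd m j)) = fun τ => Real.cos (γ τ) * uL τ j := by
          funext τ; exact hwL τ j
        rw [this, hv]
        simpa [Fin.addCases_right] using hcos.fun_mul (hL' j)
    have hw : HasDerivAt w v t := by
      have hpi : HasDerivAt (fun τ (k : Fin (m + n)) => w τ k) (fun k => v k) t :=
        hasDerivAt_pi.2 hcoord
      exact ((PiLp.continuousLinearEquiv 2 ℝ
        (fun _ : Fin (m + n) => ℝ)).symm.toContinuousLinearMap.hasFDerivAt).comp_hasDerivAt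
        t hpi
    have hderiv : deriv w t = v := hw.deriv
    rw [hderiv, euc_norm_sq_eq, Fin.sum_univ_add]
    have hvR : ∀ i : Fin m, v (Fin.castAdd n i) = c * g' * uR t i + s * deriv uR t i := by
      intro i; rw [hv]; simp [Fin.addCases_left]
    have hvL : ∀ j : Fin n, v (Fin.natAdd m j) = -s * g' * uL t j + c * deriv uL t j := by
      intro j; rw [hv]; simp [Fin.addCases_right]
    simp only [hvR, hvL]
    rw [sum_sq_expand, sum_sq_expand, euc_orth uR huR huRnorm t, euc_orth uL huL huLnorm t,
      hSR, hSL, euc_norm_sq_eq (deriv uR t), euc_norm_sq_eq (deriv uL t)]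
    ring_nf
    nlinarith [hsc]
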